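/- Let a, b be odd with a ≥ 3, b ≥ 1, and suppose T has a cycle with m oscillations, with local minima x₀,...,x_{m-1} (odd), rise lengths k₀,...,k_{m-1} and fall lengths ℓ₀,...,ℓ_{m-1}, so that (a/2)^{kᵢ}·xᵢ + (b/(a-2))·((a/2)^{kᵢ} - 1) = 2^{ℓᵢ}·x_{i+1} for each i (indices mod m). Then with K = Σkᵢ and L = Σℓᵢ: 0 < (K+L) - K·log(a)/log(2) < (b/((a-2)·log 2)) · Σ_{i=0}^{m-1} 1/xᵢ. -/

import Mathlib

open Finset Real

/-- For a cycle with `m` oscillations with odd local minima `xᵢ`,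
rise lengths `kᵢ` and fall lengths `ℓᵢ`, setting `K = Σkᵢ`, `L = Σℓᵢ`:
`0 < (K+L) - K log a/log 2 < (b/((a-2) log 2)) Σ 1/xᵢ`. -/
theorem m_oscillation_inequality
    (a b : ℤ) (ha : Odd a) (hb : Odd b) (ha3 : 3 ≤ a) (hb1 : 1 ≤ b)
    (m : ℕ) (hm : 1 ≤ m)
    (x : ℕ → ℤ) (k ℓ : ℕ → ℕ)
    (hxodd : ∀ i < m, Odd (x i)) (hxpos : ∀ i < m, 0 < x i)
    (hk : ∀ i < m, 1 ≤ k i) (hℓ : ∀ i < m, 1 ≤ ℓ i)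
    (hxm : x m = x 0)
    (heq : ∀ i < m,
      ((a : ℝ) / 2) ^ (k i) * (x i : ℝ) +
          ((b : ℝ) / ((a : ℝ) - 2)) * (((a : ℝ) / 2) ^ (k i) - 1) =
        (2 : ℝ) ^ (ℓ i) * (x (i + 1) : ℝ))
    (K L : ℕ) (hK : K = ∑ i ∈ Finset.range m, k i)
    (hL : L = ∑ i ∈ Finset.range m, ℓ i) :
    0 < (K + L : ℝ) - K * (Real.log a / Real.log 2) ∧
      (K + L : ℝ) - K * (Real.log a / Real.log 2) <
        ((b : ℝ) / (((a : ℝ) - 2) * Real.log 2)) *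
          ∑ i ∈ Finset.range m, (1 : ℝ) / (x i : ℝ) := by
  have ha2 : (2:ℝ) < (a:ℝ) := by exact_mod_cast lt_of_lt_of_le (by norm_num) ha3
  have haR : (0:ℝ) < (a:ℝ) := by linarith
  have hc : (0:ℝ) < (b:ℝ) / ((a:ℝ) - 2) := by
    apply div_pos
    · exact_mod_cast lt_of_lt_of_le (by norm_num) hb1
    · linarith
  set c : ℝ := (b:ℝ) / ((a:ℝ) - 2) with hcdef
  have hlog2 : (0:ℝ) < Real.log 2 := Real.log_pos (by norm_num)
  have hha2 : (1:ℝ) < (a:ℝ)/2 := by linarith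
  -- positivity of x i : ℝ for i ≤ m
  have hxposR : ∀ i ≤ m, (0:ℝ) < (x i : ℝ) := by
    intro i hi
    rcases eq_or_lt_of_le hi with h | h
    · subst h; rw [hxm]; exact_mod_cast hxpos 0 hm
    · exact_mod_cast hxpos i h
  -- per-term inequalities
  have ineq1 : ∀ i < m,
      (k i : ℝ) * (Real.log a - Real.log 2) + Real.log (x i) <
        (ℓ i : ℝ) * Real.log 2 + Real.log (x (i+1)) := by
    intro i hi
    have hxi := hxposR i (le_of_lt hi)
    have hxi1 := hxposR (i+1) hi
    have hpow : (1:ℝ) < ((a:ℝ)/2) ^ (k i) := one_lt_pow₀ hha2 (by have := hk i hi; omega)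
    have hlt : ((a:ℝ)/2) ^ (k i) * (x i : ℝ) < (2:ℝ) ^ (ℓ i) * (x (i+1) : ℝ) := by
      have := heq i hi
      nlinarith
    have hL1 : (0:ℝ) < ((a:ℝ)/2) ^ (k i) * (x i : ℝ) := by positivity
    have := Real.log_lt_log hL1 hlt
    rw [Real.log_mul (by positivity) (ne_of_gt hxi), Real.log_mul (by positivity) (ne_of_gt hxi1),
      Real.log_pow, Real.log_pow, Real.log_div (ne_of_gt haR) (by norm_num)] at this
    linarith
  have ineq2 : ∀ i < m,
      (ℓ i : ℝ) * Real.log 2 + Real.log (x (i+1)) <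
        (k i : ℝ) * (Real.log a - Real.log 2) + Real.log (x i) + c / (x i : ℝ) := by
    intro i hi
    have hxi := hxposR i (le_of_lt hi)
    have hxi1 := hxposR (i+1) hi
    have hpow : (1:ℝ) < ((a:ℝ)/2) ^ (k i) := one_lt_pow₀ hha2 (by have := hk i hi; omega)
    have hlt : (2:ℝ) ^ (ℓ i) * (x (i+1) : ℝ) < ((a:ℝ)/2) ^ (k i) * ((x i : ℝ) + c) := by
      have := heq i hi
      nlinarith
    have hR1 : (0:ℝ) < (2:ℝ) ^ (ℓ i) * (x (i+1) : ℝ) := by positivity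
    have hlog := Real.log_lt_log hR1 hlt
    rw [Real.log_mul (by positivity) (ne_of_gt hxi1),
      Real.log_mul (by positivity) (by positivity : ((x i : ℝ) + c) ≠ 0),
      Real.log_pow, Real.log_pow, Real.log_div (ne_of_gt haR) (by norm_num)] at hlog
    -- log(x i + c) < log (x i) + c / x i
    have hlogc : Real.log ((x i : ℝ) + c) < Real.log (x i) + c / (x i : ℝ) := by
      have hratio : (0:ℝ) < ((x i : ℝ) + c) / (x i : ℝ) := by positivity
      have hne : ((x i : ℝ) + c) / (x i : ℝ) ≠ 1 := by
        intro h
        have := (div_eq_one_iff_eq (ne_of_gt hxi)).mp h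
        linarith
      have := Real.log_lt_sub_one_of_pos hratio hne
      rw [Real.log_div (by positivity) (ne_of_gt hxi)] at this
      have hexp : ((x i : ℝ) + c) / (x i : ℝ) - 1 = c / (x i : ℝ) := by
        field_simp
        ring
      linarith [hexp ▸ this]
    linarith
  -- sum the inequalities
  have hsum1 : ∑ i ∈ range m, ((k i : ℝ) * (Real.log a - Real.log 2) + Real.log (x i)) <
      ∑ i ∈ range m, ((ℓ i : ℝ) * Real.log 2 + Real.log (x (i+1))) :=
    Finset.sum_lt_sum_of_nonempty (by simp; omega) (fun i hi => ineq1 i (Finset.mem_range.mp hi))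
  have hsum2 : ∑ i ∈ range m, ((ℓ i : ℝ) * Real.log 2 + Real.log (x (i+1))) <
      ∑ i ∈ range m, ((k i : ℝ) * (Real.log a - Real.log 2) + Real.log (x i) + c / (x i : ℝ)) :=
    Finset.sum_lt_sum_of_nonempty (by simp; omega) (fun i hi => ineq2 i (Finset.mem_range.mp hi))
  -- telescoping
  have htel : ∑ i ∈ range m, (Real.log (x (i+1)) - Real.log (x i)) = 0 := by
    rw [Finset.sum_range_sub (fun i => Real.log (x i)), hxm, sub_self]
  have hKs : ∑ i ∈ range m, (k i : ℝ) = (K : ℝ) := by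
    rw [hK]; push_cast; ring
  have hLs : ∑ i ∈ range m, (ℓ i : ℝ) = (L : ℝ) := by
    rw [hL]; push_cast; ring
  have hD1 : (0:ℝ) < ((K:ℝ) + L) * Real.log 2 - K * Real.log a := by
    have e1 : ∑ i ∈ range m, ((k i : ℝ) * (Real.log a - Real.log 2) + Real.log (x i))
        = (K:ℝ) * (Real.log a - Real.log 2) + ∑ i ∈ range m, Real.log (x i) := by
      rw [Finset.sum_add_distrib, ← Finset.sum_mul, hKs]
    have e2 : ∑ i ∈ range m, ((ℓ i : ℝ) * Real.log 2 + Real.log (x (i+1)))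
        = (L:ℝ) * Real.log 2 + ∑ i ∈ range m, Real.log (x (i+1)) := by
      rw [Finset.sum_add_distrib, ← Finset.sum_mul, hLs]
    have e3 : ∑ i ∈ range m, Real.log (x (i+1)) = ∑ i ∈ range m, Real.log (x i) := by
      have := htel
      rw [Finset.sum_sub_distrib] at this
      linarith
    rw [e1, e2, e3] at hsum1
    linarith
  have hD2 : ((K:ℝ) + L) * Real.log 2 - K * Real.log a <
      c * ∑ i ∈ range m, (1:ℝ) / (x i : ℝ) := by
    have e1 : ∑ i ∈ range m, ((k i : ℝ) * (Real.log a - Real.log 2) + Real.log (x i) + c / (x i : ℝ))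
        = (K:ℝ) * (Real.log a - Real.log 2) + ∑ i ∈ range m, Real.log (x i)
          + c * ∑ i ∈ range m, (1:ℝ) / (x i : ℝ) := by
      rw [Finset.sum_add_distrib, Finset.sum_add_distrib, ← Finset.sum_mul, hKs,
        Finset.mul_sum]
      congr 1
      apply Finset.sum_congr rfl
      intro i _
      rw [mul_one_div]
    have e2 : ∑ i ∈ range m, ((ℓ i : ℝ) * Real.log 2 + Real.log (x (i+1)))
        = (L:ℝ) * Real.log 2 + ∑ i ∈ range m, Real.log (x (i+1)) := by
      rw [Finset.sum_add_distrib, ← Finset.sum_mul, hLs]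
    have e3 : ∑ i ∈ range m, Real.log (x (i+1)) = ∑ i ∈ range m, Real.log (x i) := by
      have := htel
      rw [Finset.sum_sub_distrib] at this
      linarith
    rw [e1, e2, e3] at hsum2
    linarith
  -- convert goal
  have hgoal : (K + L : ℝ) - K * (Real.log a / Real.log 2)
      = (((K:ℝ) + L) * Real.log 2 - K * Real.log a) / Real.log 2 := by
    field_simp
  have hrhs : ((b : ℝ) / (((a : ℝ) - 2) * Real.log 2)) * ∑ i ∈ range m, (1:ℝ) / (x i : ℝ)
      = (c * ∑ i ∈ range m, (1:ℝ) / (x i : ℝ)) / Real.log 2 := by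
    rw [hcdef]; field_simp
  constructor
  · rw [hgoal]; positivity
  · rw [hgoal, hrhs]
    exact div_lt_div_of_pos_right hD2 hlog2
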